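/- Let p > 1 and let H(x) = x⁴ − (32p(p+1)/(p−1)²)x² + (32p(p+1)(p+3)/(p−1)³)x − 64p(p+1)²/(p−1)⁴. Let x₀ be the largest real root of H (i.e. H(x₀) = 0 and H(x) ≠ 0 for all x > x₀). Then x₀ > 5. -/

import Mathlib

/-- The quartic polynomial `L`. -/
noncomputable def Lpoly (p s : ℝ) : ℝ :=
  s ^ 4 - 32 * p / (p + 1) * s ^ 2 + 32 * p * (p + 3) / (p + 1) ^ 2 * s
    - 64 * p / (p + 1) ^ 2

/-- `t₀ = √(2p/(p+1)) + √(2p/(p+1) − √(2p/(p+1)))`. -/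
noncomputable def t0 (p : ℝ) : ℝ :=
  Real.sqrt (2 * p / (p + 1)) +
    Real.sqrt (2 * p / (p + 1) - Real.sqrt (2 * p / (p + 1)))

/-- The quartic polynomial `H` from Theorem 1.1. -/
noncomputable def Hpoly (p x : ℝ) : ℝ :=
  x ^ 4 - 32 * p * (p + 1) / (p - 1) ^ 2 * x ^ 2
    + 32 * p * (p + 1) * (p + 3) / (p - 1) ^ 3 * x
    - 64 * p * (p + 1) ^ 2 / (p - 1) ^ 4
/-- The largest real root `x₀` of `H` satisfies `x₀ > 5` for every `p > 1`. -/
theorem largest_root_gt_five (p : ℝ) (hp : 1 < p) (x₀ : ℝ)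
    (hroot : Hpoly p x₀ = 0) (hlargest : ∀ x : ℝ, x₀ < x → Hpoly p x ≠ 0) :
    5 < x₀ := by
  have hq0 : 0 < p - 1 := by linarith
  set q : ℝ := p - 1 with hq
  set xs : ℝ := 5 + 4 / q with hxs
  have hx5 : 5 < xs := by
    have : 0 < 4 / q := by positivity
    simp [hxs]; linarith
  -- H is negative at xs
  have hHx : Hpoly p xs < 0 := by
    have hp1 : p = q + 1 := by rw [hq]; ring
    have h : Hpoly p xs = -((15*q^4+496*q^3+736*q^2+256*q)/q^4) := by
      unfold Hpoly
      rw [hxs, hp1, add_sub_cancel_right]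
      have hqne : q ≠ 0 := ne_of_gt hq0
      field_simp
      ring
    rw [h]
    have : 0 < (15*q^4+496*q^3+736*q^2+256*q)/q^4 := by positivity
    linarith
  -- suppose x₀ < xs, derive contradiction via IVT
  by_contra hcon
  push_neg at hcon
  have hx0lt : x₀ < xs := by linarith
  obtain ⟨A, hAdef⟩ : ∃ A : ℝ, A = 32 * p * (p + 1) / (p - 1) ^ 2 := ⟨_, rfl⟩
  obtain ⟨B, hBdef⟩ : ∃ B : ℝ, B = 32 * p * (p + 1) * (p + 3) / (p - 1) ^ 3 := ⟨_, rfl⟩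
  obtain ⟨C, hCdef⟩ : ∃ C : ℝ, C = 64 * p * (p + 1) ^ 2 / (p - 1) ^ 4 := ⟨_, rfl⟩
  have hq2 : (0:ℝ) < (p-1)^2 := by positivity
  have hq3 : (0:ℝ) < (p-1)^3 := by positivity
  have hq4 : (0:ℝ) < (p-1)^4 := by positivity
  have hA : 0 < A := hAdef ▸ div_pos (by nlinarith) hq2
  have hB : 0 < B := hBdef ▸ div_pos (by nlinarith) hq3
  have hC : 0 < C := hCdef ▸ div_pos (by nlinarith) hq4
  obtain ⟨M, hM⟩ : ∃ M : ℝ, M = xs + A + C + 1 := ⟨_, rfl⟩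
  have hxsM : xs < M := by rw [hM]; linarith
  have hM1 : (1:ℝ) ≤ M := by rw [hM]; linarith
  have hMAC : A + C + 1 ≤ M := by rw [hM]; linarith
  have hHM : 0 < Hpoly p M := by
    have hHMeq : Hpoly p M = M^4 - A*M^2 + B*M - C := by
      unfold Hpoly; rw [hAdef, hBdef, hCdef]
    rw [hHMeq]
    have hMpos : (0:ℝ) < M := lt_of_lt_of_le one_pos hM1
    have hMM : M ≤ M^2 := by
      calc M = 1*M := (one_mul M).symm
        _ ≤ M*M := mul_le_mul_of_nonneg_right hM1 (le_of_lt hMpos)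
        _ = M^2 := (sq M).symm
    have hM2 : (1:ℝ) ≤ M^2 := le_trans hM1 hMM
    have h1 : C + 1 ≤ M^2 - A := by linarith
    have h2 : M^2*(C+1) ≤ M^2*(M^2-A) := mul_le_mul_of_nonneg_left h1 (sq_nonneg M)
    have h3 : C+1 ≤ M^2*(C+1) := le_mul_of_one_le_left (by linarith) hM2
    have h4 : M^2*(M^2-A) = M^4 - A*M^2 := by ring
    have h5 : 0 < B*M := mul_pos hB hMpos
    linarith
  have hcont : Continuous fun x => Hpoly p x := by
    unfold Hpoly; fun_prop
  have hsub := intermediate_value_Ioo (le_of_lt hxsM) hcont.continuousOn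
  have hmem : (0:ℝ) ∈ Set.Ioo (Hpoly p xs) (Hpoly p M) := ⟨hHx, hHM⟩
  obtain ⟨c, hc, hc0⟩ := hsub hmem
  exact hlargest c (lt_trans hx0lt hc.1) hc0
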